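/- Let Y be a locally convex space, g : Y → ℝ a lower semicontinuous convex function, and Ψ : ℝ → ℝ ∪ {+∞} a non-decreasing convex function that is continuously differentiable on (the interior of) its domain. Then for every x ∈ Y with g(x) in the interior of dom Ψ and Ψ'(g(x)) > 0, one has ∂(Ψ ∘ g)(x) = Ψ'(g(x)) · ∂g(x). -/

import Mathlib

open Topology Set Pointwise Bornology

noncomputable section

section Defs

variable {X : Type*} [AddCommGroup X] [Module ℝ X] [TopologicalSpace X]

/-- Fenchel conjugate of an extended-real-valued function `f : X → ℝ ∪ {+∞}`. -/
def conjugate (f : X → EReal) (φ : X →L[ℝ] ℝ) : EReal := ⨆ x : X, (φ x : EReal) - f x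

/-- Moreau–Rockafellar subdifferential of `f : X → ℝ ∪ {+∞}` at `x`. -/
def subdiff (f : X → EReal) (x : X) : Set (X →L[ℝ] ℝ) :=
  {φ | ∀ y : X, ((φ (y - x) : ℝ) : EReal) + f x ≤ f y}

/-- A set `A ⊆ X` is weakly compact (compact for the weak topology `σ(X, X*)`). -/
def WeaklyCompact (A : Set X) : Prop := IsCompact (toWeakSpace ℝ X '' A)

/-- A set `A ⊆ X` is relatively weakly compact. -/
def RelWeaklyCompact (A : Set X) : Prop := IsCompact (closure (toWeakSpace ℝ X '' A))

/-- The directional asymptotic cone of a set of continuous linear functionals. -/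
def asympCone (A : Set (X →L[ℝ] ℝ)) : Set (X →L[ℝ] ℝ) :=
  {y | ∃ x ∈ A, ∀ l : ℝ, 0 ≤ l → x + l • y ∈ A}

/-- The class `ℰ(K)` of functions `φ : X → ℝ ∪ {+∞}` from Definition 3.1. -/
def EClass (K : Set (X →L[ℝ] ℝ)) : Set (X → EReal) :=
  {φ | (∀ ψ : X →L[ℝ] ℝ, conjugate φ ψ ≠ ⊥) ∧ conjugate φ 0 = 0 ∧
    asympCone K ⊆ {ψ | conjugate φ ψ ≠ ⊤} ∧ {ψ | conjugate φ ψ ≠ ⊤} ⊆ K ∧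
    (∀ ψ ∈ K \ asympCone K,
      sSup {v : EReal | ∃ η : ℝ, 0 < η ∧ conjugate φ (η • ψ) ≠ ⊤ ∧ v = conjugate φ (η • ψ)} = ⊤) ∧
    (∀ ψ : X →L[ℝ] ℝ, conjugate φ ψ ≠ ⊤ → ∃ x : X, ψ ∈ subdiff φ x)}

/-- Polar of a subset of `X`. -/
def pol (K : Set X) : Set (X →L[ℝ] ℝ) := {φ | ∀ x ∈ K, φ x ≤ 1}

/-- Support function of a subset of `X`. -/
def supportFn (A : Set X) (φ : X →L[ℝ] ℝ) : EReal := sSup ((fun x => ((φ x : ℝ) : EReal)) '' A)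

/-- A set is open for the Mackey topology `τ(X*,X)`: around each of its points it contains a
translate of the polar of some weakly compact balanced (circled) convex subset of `X`. -/
def MackeyOpen (U : Set (X →L[ℝ] ℝ)) : Prop :=
  ∀ φ ∈ U, ∃ K : Set X, WeaklyCompact K ∧ Balanced ℝ K ∧ Convex ℝ K ∧
    {ψ : X →L[ℝ] ℝ | ∀ x ∈ K, (ψ - φ) x ≤ 1} ⊆ U

/-- `F : X* → ℝ ∪ {±∞}` is continuous at `φ` for the Mackey topology `τ(X*,X)`. -/
def MackeyContinuousAt (F : (X →L[ℝ] ℝ) → EReal) (φ : X →L[ℝ] ℝ) : Prop :=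
  ∀ V ∈ 𝓝 (F φ), ∃ K : Set X, WeaklyCompact K ∧ Balanced ℝ K ∧ Convex ℝ K ∧
    ∀ ψ : X →L[ℝ] ℝ, (∀ x ∈ K, (ψ - φ) x ≤ 1) → F ψ ∈ V

/-- `f` is epi-pointed: `f*` is proper and `τ(X*,X)`-continuous at some point of its domain. -/
def EpiPointed (f : X → EReal) : Prop :=
  (∃ ψ : X →L[ℝ] ℝ, conjugate f ψ ≠ ⊤) ∧ (∀ ψ : X →L[ℝ] ℝ, conjugate f ψ ≠ ⊥) ∧
  ∃ φ : X →L[ℝ] ℝ, conjugate f φ ≠ ⊤ ∧ MackeyContinuousAt (conjugate f) φ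

/-- Relative compactness in `X × ℝ` for the product of the weak topology `σ(X, X*)` on `X`
with the usual topology on `ℝ`. -/
def RelWeaklyCompactProd (A : Set (X × ℝ)) : Prop :=
  IsCompact (closure ((fun p : X × ℝ => ((toWeakSpace ℝ X p.1 : WeakSpace ℝ X), p.2)) '' A))

/-- Epigraph of `f : X → ℝ ∪ {+∞}` (as a subset of `X × ℝ`). -/
def Epigr (f : X → EReal) : Set (X × ℝ) := {p | f p.1 ≤ (p.2 : EReal)}

/-- Inf-convolution of two extended-real-valued functions. -/
def infConv (f g : X → EReal) (x : X) : EReal := ⨅ z : X, f z + g (x - z)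

/-- Convexity for extended-real-valued functions. -/
def EConvex (f : X → EReal) : Prop :=
  ∀ x y : X, ∀ a b : ℝ, 0 ≤ a → 0 ≤ b → a + b = 1 →
    f (a • x + b • y) ≤ (a : EReal) * f x + (b : EReal) * f y

/-- The algebraic interior of a set of continuous linear functionals. -/
def algInt (A : Set (X →L[ℝ] ℝ)) : Set (X →L[ℝ] ℝ) :=
  {a ∈ A | ∀ ψ : X →L[ℝ] ℝ, ∃ δ > (0:ℝ), ∀ l ∈ Set.Icc (0:ℝ) δ, a + l • ψ ∈ A}

/-- Subdifferential of a real-valued function on `X*`, with respect to the pairing with `X`. -/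
def subdiffStar (g : (X →L[ℝ] ℝ) → ℝ) (φ : X →L[ℝ] ℝ) : Set X :=
  {x | ∀ ψ : X →L[ℝ] ℝ, (ψ - φ) x + g φ ≤ g ψ}

end Defs

section Defs2

variable {X : Type*} [AddCommGroup X] [Module ℝ X] [TopologicalSpace X]

/-- Support function (on `X`) of a set of continuous linear functionals. -/
def supportFnStar (A : Set (X →L[ℝ] ℝ)) (x : X) : EReal :=
  sSup ((fun ψ : X →L[ℝ] ℝ => ((ψ x : ℝ) : EReal)) '' A)

/-- Subdifferential of an extended-real-valued function on `X*`, w.r.t. the pairing with `X`. -/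
def subdiffStarE (F : (X →L[ℝ] ℝ) → EReal) (φ : X →L[ℝ] ℝ) : Set X :=
  {x | ∀ ψ : X →L[ℝ] ℝ, (((ψ - φ) x : ℝ) : EReal) + F φ ≤ F ψ}

end Defs2

/-- Chain rule for the subdifferential of the composition `Ψ ∘ g` (Lemma 3.3). -/
theorem subdiff_comp_eq_smul_subdiff
    {Y : Type*} [AddCommGroup Y] [Module ℝ Y] [TopologicalSpace Y]
    [IsTopologicalAddGroup Y] [ContinuousSMul ℝ Y] [LocallyConvexSpace ℝ Y] [T2Space Y]
    (g : Y → ℝ) (hlsc : LowerSemicontinuous g) (hconv : ConvexOn ℝ Set.univ g)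
    (Ψ : ℝ → EReal) (hΨbot : ∀ t : ℝ, Ψ t ≠ ⊥) (hmono : Monotone Ψ)
    (hΨconv : ∀ s t : ℝ, ∀ a b : ℝ, 0 ≤ a → 0 ≤ b → a + b = 1 →
      Ψ (a * s + b * t) ≤ (a : EReal) * Ψ s + (b : EReal) * Ψ t)
    (ψ : ℝ → ℝ) (hψ : ∀ t : ℝ, Ψ t ≠ ⊤ → Ψ t = (ψ t : EReal))
    (Ψ' : ℝ → ℝ)
    (hderiv : ∀ t ∈ interior {t : ℝ | Ψ t ≠ ⊤}, HasDerivAt ψ (Ψ' t) t)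
    (hcont : ContinuousOn Ψ' (interior {t : ℝ | Ψ t ≠ ⊤}))
    (x : Y) (hx : g x ∈ interior {t : ℝ | Ψ t ≠ ⊤}) (hpos : 0 < Ψ' (g x)) :
    subdiff (fun y => Ψ (g y)) x = Ψ' (g x) • subdiff (fun y => ((g y : ℝ) : EReal)) x := by
  set t0 : ℝ := g x with ht0
  set c : ℝ := Ψ' t0 with hc
  have hc0 : c ≠ 0 := ne_of_gt hpos
  -- S is a lower set
  have hS : ∀ t s : ℝ, t ≤ s → Ψ s ≠ ⊤ → Ψ t ≠ ⊤ := fun t s hts hs ht =>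
    hs (top_le_iff.mp (ht ▸ hmono hts))
  have ht0top : Ψ t0 ≠ ⊤ := interior_subset hx
  -- a ball around t0 inside S
  obtain ⟨ε, hε, hball⟩ := Metric.mem_nhds_iff.mp (mem_interior_iff_mem_nhds.mp hx)
  have hSlow : ∀ t : ℝ, t < t0 + ε → Ψ t ≠ ⊤ := by
    intro t ht
    refine hS t (max t t0) (le_max_left _ _) (hball ?_)
    simp only [Metric.mem_ball, Real.dist_eq, abs_lt]
    constructor
    · linarith [le_max_right t t0]
    · linarith [max_lt (show t < t0 + ε by linarith) (show t0 < t0 + ε by linarith)]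
  have hd : HasDerivAt ψ c t0 := hderiv t0 hx
  -- the limit lemma
  have hlim : ∀ d : ℝ, Filter.Tendsto (fun a : ℝ => (ψ (t0 + a * d) - ψ t0) / a)
      (𝓝[>] (0:ℝ)) (𝓝 (c * d)) := by
    intro d
    have h1 : HasDerivAt (fun a : ℝ => ψ (t0 + a * d)) (c * d) 0 := by
      have hin : HasDerivAt (fun a : ℝ => t0 + a * d) d 0 := by
        simpa using ((hasDerivAt_id (0:ℝ)).mul_const d).const_add t0
      have hψ0 : HasDerivAt ψ c ((fun a : ℝ => t0 + a * d) 0) := by simpa using hd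
      have := HasDerivAt.comp (0:ℝ) hψ0 hin
      exact this
    have h2 := hasDerivAt_iff_tendsto_slope.mp h1
    have h3 : Filter.Tendsto (slope (fun a : ℝ => ψ (t0 + a * d)) 0) (𝓝[>] (0:ℝ)) (𝓝 (c * d)) :=
      h2.mono_left (nhdsWithin_mono _ (fun a ha => ne_of_gt ha))
    refine h3.congr (fun a => ?_)
    simp [slope_def_field]
  -- real convexity inequality
  have hconvψ : ∀ t : ℝ, Ψ t ≠ ⊤ → ∀ a : ℝ, 0 < a → a ≤ 1 →
      ψ (t0 + a * (t - t0)) ≤ ψ t0 + a * (ψ t - ψ t0) := by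
    intro t ht a ha ha1
    have hmid : Ψ ((1 - a) * t0 + a * t) ≠ ⊤ := by
      rcases le_total t t0 with h | h
      · exact hS _ t0 (by nlinarith) ht0top
      · exact hS _ t (by nlinarith) ht
    have := hΨconv t0 t (1 - a) a (by linarith) (le_of_lt ha) (by ring)
    rw [hψ _ hmid, hψ _ ht, hψ _ ht0top] at this
    have h2 : ((ψ ((1 - a) * t0 + a * t) : ℝ) : EReal) ≤
        (((1 - a) * ψ t0 + a * ψ t : ℝ) : EReal) := by
      push_cast
      exact this
    rw [EReal.coe_le_coe_iff] at h2
    have he : t0 + a * (t - t0) = (1 - a) * t0 + a * t := by ring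
    rw [he]
    linarith
  -- Fact A: global subgradient inequality for Ψ at t0
  have hA : ∀ t : ℝ, ((c * (t - t0) : ℝ) : EReal) + Ψ t0 ≤ Ψ t := by
    intro t
    by_cases ht : Ψ t = ⊤
    · rw [ht]; exact le_top
    · have hreal : c * (t - t0) ≤ ψ t - ψ t0 := by
        have hev : ∀ᶠ a in 𝓝[>] (0:ℝ),
            (ψ (t0 + a * (t - t0)) - ψ t0) / a ≤ ψ t - ψ t0 := by
          filter_upwards [Ioc_mem_nhdsGT_of_mem (Set.mem_Ico.mpr ⟨le_refl (0:ℝ), one_pos⟩),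
            self_mem_nhdsWithin] with a ha hap
          have := hconvψ t ht a hap ha.2
          rw [div_le_iff₀ hap]
          nlinarith
        exact le_of_tendsto (hlim (t - t0)) hev
      rw [hψ _ ht, hψ _ ht0top]
      have : ((c * (t - t0) + ψ t0 : ℝ) : EReal) ≤ ((ψ t : ℝ) : EReal) :=
        EReal.coe_le_coe_iff.mpr (by linarith)
      push_cast at this
      exact this
  ext φ
  simp only [subdiff, Set.mem_setOf_eq, Set.mem_smul_set]
  constructor
  · intro hφ
    refine ⟨c⁻¹ • φ, ?_, ?_⟩
    · intro y
      set d : ℝ := g y - t0 with hdd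
      have hkey : φ (y - x) ≤ c * d := by
        have hev : ∀ᶠ a in 𝓝[>] (0:ℝ),
            φ (y - x) ≤ (ψ (t0 + a * d) - ψ t0) / a := by
          have h2 : (0:ℝ) < |d| + 1 := by positivity
          have hδ : (0:ℝ) < min 1 (ε / (|d| + 1)) := lt_min one_pos (by positivity)
          filter_upwards [Ioo_mem_nhdsGT_of_mem
            (Set.mem_Ico.mpr ⟨le_refl (0:ℝ), hδ⟩), self_mem_nhdsWithin] with a ha hap
          have haa : a ≤ 1 := le_of_lt (lt_of_lt_of_le ha.2 (min_le_left _ _))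
          have ha1 : a * d < ε := by
            have h1 : a * d ≤ a * |d| :=
              mul_le_mul_of_nonneg_left (le_abs_self d) (le_of_lt ha.1)
            have h3 : a < ε / (|d| + 1) := lt_of_lt_of_le ha.2 (min_le_right _ _)
            have h4 : a * (|d| + 1) < ε := (lt_div_iff₀ h2).mp h3
            nlinarith [ha.1.le]
          have htin : Ψ (t0 + a * d) ≠ ⊤ := hSlow _ (by linarith)
          set z : Y := x + a • (y - x) with hz
          have hgz : g z ≤ t0 + a * d := by
            have h1 := hconv.2 (Set.mem_univ x) (Set.mem_univ y)
              (by linarith : (0:ℝ) ≤ 1 - a) (le_of_lt hap) (by ring)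
            have h2 : (1 - a) • x + a • y = z := by
              rw [hz]; module
            rw [h2] at h1
            simp only [smul_eq_mul] at h1
            rw [hdd]; ring_nf; ring_nf at h1; linarith
          have hΨz : Ψ (g z) ≤ ((ψ (t0 + a * d) : ℝ) : EReal) := by
            rw [← hψ _ htin]; exact hmono hgz
          have hφz := hφ z
          have hzx : z - x = a • (y - x) := by rw [hz]; abel
          rw [hzx, map_smul] at hφz
          have hchain : ((a • φ (y - x) : ℝ) : EReal) + ((ψ t0 : ℝ) : EReal) ≤
              ((ψ (t0 + a * d) : ℝ) : EReal) := by
            rw [← hψ _ ht0top]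
            exact le_trans hφz hΨz
          have hreal : a • φ (y - x) + ψ t0 ≤ ψ (t0 + a * d) := by
            have := hchain
            push_cast at this
            exact_mod_cast this
          rw [le_div_iff₀ hap]
          simp only [smul_eq_mul] at hreal
          linarith
        exact ge_of_tendsto (hlim d) hev
      have : ((c⁻¹ • φ) (y - x) : ℝ) + g x ≤ g y := by
        simp only [ContinuousLinearMap.coe_smul', Pi.smul_apply, smul_eq_mul]
        have h1 : c⁻¹ * φ (y - x) ≤ c⁻¹ * (c * d) := by
          apply mul_le_mul_of_nonneg_left hkey
          positivity
        rw [inv_mul_cancel_left₀ hc0] at h1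
        have h2 : d = g y - g x := hdd
        linarith
      exact_mod_cast EReal.coe_le_coe_iff.mpr this
    · rw [smul_smul, mul_inv_cancel₀ hc0, one_smul]
  · rintro ⟨η, hη, rfl⟩
    intro y
    have hηy : η (y - x) + g x ≤ g y := by
      have := hη y
      exact_mod_cast this
    have h1 : ((c • η) (y - x) : ℝ) ≤ c * (g y - t0) := by
      simp only [ContinuousLinearMap.coe_smul', Pi.smul_apply, smul_eq_mul]
      have h2 : t0 = g x := rfl
      nlinarith
    calc (((c • η) (y - x) : ℝ) : EReal) + Ψ (g x)
        ≤ ((c * (g y - t0) : ℝ) : EReal) + Ψ (g x) := by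
          apply add_le_add_left
          exact_mod_cast h1
    _ ≤ Ψ (g y) := hA (g y)


end
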